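/- Let r1td, r2td, r1no, r2no, L1, L2, tc1 > 0 with tc1 < L2/r2td and λ := r1no/r1td + r2no/r2td - 1 ≥ 0. Set t2* := max((L2 - (L1/r1no)·r2no)/r2td, tc1), t_no* := (L2 - t2*·r2td)/r2no, t1* := (L1 - t_no*·r1no)/r1td. Then (t1*, t2*, t_no*) is an optimal solution of: minimize t1 + t_no + t2 + max(0, tc1 - t2) subject to t1·r1td + t_no·r1no = L1, t2·r2td + t_no·r2no = L2, t1, t2, t_no ≥ 0, provided r1no ≤ r1td and r2no ≤ r2td. -/

import Mathlib

/-- finite cloud capacity, case `tc1 < L2/r2td` and nonnegative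
NOMA priority — the stated point is an optimal solution. -/
theorem stmt_12 (r1td r2td r1no r2no L1 L2 tc1 : ℝ)
    (hr1td : 0 < r1td) (hr2td : 0 < r2td) (hr1no : 0 < r1no) (hr2no : 0 < r2no)
    (hL1 : 0 < L1) (hL2 : 0 < L2) (htc1 : 0 < tc1)
    (hb1 : r1no ≤ r1td) (hb2 : r2no ≤ r2td)
    (hcase : tc1 < L2 / r2td)
    (hlam : 0 ≤ r1no / r1td + r2no / r2td - 1) :
    let t2s := max ((L2 - (L1 / r1no) * r2no) / r2td) tc1
    let tnos := (L2 - t2s * r2td) / r2no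
    let t1s := (L1 - tnos * r1no) / r1td
    (0 ≤ t1s ∧ 0 ≤ t2s ∧ 0 ≤ tnos ∧
      t1s * r1td + tnos * r1no = L1 ∧ t2s * r2td + tnos * r2no = L2) ∧
    (∀ t1 t2 tno : ℝ, 0 ≤ t1 → 0 ≤ t2 → 0 ≤ tno →
      t1 * r1td + tno * r1no = L1 → t2 * r2td + tno * r2no = L2 →
      t1s + tnos + t2s + max 0 (tc1 - t2s) ≤
        t1 + tno + t2 + max 0 (tc1 - t2)) := by
  intro t2s tnos t1s
  have ht2s_def : t2s = max ((L2 - (L1 / r1no) * r2no) / r2td) tc1 := rfl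
  have htnos_def : tnos = (L2 - t2s * r2td) / r2no := rfl
  have ht1s_def : t1s = (L1 - tnos * r1no) / r1td := rfl
  have h1 : tc1 ≤ t2s := le_max_right _ _
  have h2 : (L2 - (L1 / r1no) * r2no) / r2td ≤ t2s := le_max_left _ _
  have hL1r : 0 < L1 / r1no := div_pos hL1 hr1no
  have h3 : t2s ≤ L2 / r2td := by
    rw [ht2s_def]
    refine max_le ?_ hcase.le
    gcongr
    nlinarith [mul_pos hL1r hr2no]
  -- basic bounds
  have htnos_le : tnos ≤ L1 / r1no := by
    rw [htnos_def, div_le_iff₀ hr2no]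
    have h2' : L2 - (L1 / r1no) * r2no ≤ t2s * r2td := (div_le_iff₀ hr2td).mp h2
    linarith
  have htnos0 : 0 ≤ tnos := by
    rw [htnos_def]
    apply div_nonneg _ hr2no.le
    have := (le_div_iff₀ hr2td).mp h3
    linarith
  have ht1s0 : 0 ≤ t1s := by
    rw [ht1s_def]
    apply div_nonneg _ hr1td.le
    have := (le_div_iff₀ hr1no).mp htnos_le
    linarith
  have ht2s0 : 0 ≤ t2s := le_trans htc1.le h1
  have hBs : t2s * r2td + tnos * r2no = L2 := by
    rw [htnos_def]; field_simp; ring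
  have hAs : t1s * r1td + tnos * r1no = L1 := by
    rw [ht1s_def]; field_simp; ring
  clear_value t1s tnos t2s
  refine ⟨⟨ht1s0, ht2s0, htnos0, hAs, hBs⟩, ?_⟩
  intro t1 t2 tno ht1 ht2 htno hA hB
  have hM0 : (0:ℝ) ≤ max 0 (tc1 - t2) := le_max_left _ _
  have hM1 : tc1 - t2 ≤ max 0 (tc1 - t2) := le_max_right _ _
  have hMs : max 0 (tc1 - t2s) = 0 := max_eq_left (by linarith)
  rw [hMs, add_zero]
  set M := max 0 (tc1 - t2) with hM
  -- K = lambda * r1td * r2td ≥ 0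
  set K := r1no * r2td + r2no * r1td - r1td * r2td with hKdef
  have hK : 0 ≤ K := by
    have h := hlam
    rw [sub_nonneg, div_add_div _ _ hr1td.ne' hr2td.ne', le_div_iff₀ (by positivity)] at h
    rw [hKdef]; linarith
  have hpos : (0:ℝ) < r1td * r2td := by positivity
  have exps : (t1s + tnos + t2s) * (r1td * r2td) = L1 * r2td + L2 * r1td - tnos * K := by
    rw [hKdef]; linear_combination r2td * hAs + r1td * hBs
  have expo : (t1 + tno + t2) * (r1td * r2td) = L1 * r2td + L2 * r1td - tno * K := by
    rw [hKdef]; linear_combination r2td * hA + r1td * hB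
  have htno_le : tno ≤ L1 / r1no := by
    rw [le_div_iff₀ hr1no]
    linarith only [mul_nonneg ht1 hr1td.le, hA]
  have hfin : K * (tno - tnos) ≤ M * (r1td * r2td) := by
    by_cases hc : (L2 - (L1 / r1no) * r2no) / r2td ≤ tc1
    · have ht2seq : t2s = tc1 := by rw [ht2s_def]; exact max_eq_right hc
      rcases le_total tno tnos with hle | hle
      · linarith only [mul_nonneg hK (sub_nonneg.mpr hle), mul_nonneg hM0 hpos.le]
      · have hd : 0 ≤ tno - tnos := sub_nonneg.mpr hle
        have hK2 : K ≤ r2no * r1td := by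
          rw [hKdef]; linarith only [mul_le_mul_of_nonneg_right hb1 hr2td.le]
        have heq : (tc1 - t2) * r2td = (tno - tnos) * r2no := by
          have h := hBs; rw [ht2seq] at h; linarith only [hB, h]
        have h5 : K * (tno - tnos) ≤ r2no * r1td * (tno - tnos) :=
          mul_le_mul_of_nonneg_right hK2 hd
        have h6 : (tc1 - t2) * r2td * r1td = (tno - tnos) * r2no * r1td := by
          linear_combination r1td * heq
        have h7 : (tc1 - t2) * (r2td * r1td) ≤ M * (r2td * r1td) :=
          mul_le_mul_of_nonneg_right hM1 (by positivity)
        linarith only [h5, h6, h7]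
    · have ht2seq : t2s = (L2 - (L1 / r1no) * r2no) / r2td := by
        rw [ht2s_def]; exact max_eq_left (not_le.mp hc).le
      have htnoseq : tnos = L1 / r1no := by
        rw [htnos_def, ht2seq]; field_simp; ring
      have hle : tno ≤ tnos := by rw [htnoseq]; exact htno_le
      linarith only [mul_nonneg hK (sub_nonneg.mpr hle), mul_nonneg hM0 hpos.le]
  rw [← mul_le_mul_iff_of_pos_right hpos]
  linarith only [exps, expo, hfin]
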